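/- Let T = α e₁∧e₃∧e₅ + α' e₂∧e₄∧e₆ + β(e₂∧e₄∧e₅ + e₂∧e₃∧e₆ + e₁∧e₄∧e₆) be a 3-form on ℝ⁶. Then σ_T = β(β - α)(e₁∧e₂∧e₅∧e₆ + e₁∧e₂∧e₃∧e₄ + e₃∧e₄∧e₅∧e₆). In particular, the 2-form *σ_T has rank 6 if and only if β ≠ 0 and α ≠ β. -/

import Mathlib

/- STATEMENT 15: For T = α e₁∧e₃∧e₅ + α' e₂∧e₄∧e₆ + β(e₂∧e₄∧e₅ + e₂∧e₃∧e₆ + e₁∧e₄∧e₆)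
on ℝ⁶ one has σ_T = β(β-α)(e₁∧e₂∧e₅∧e₆ + e₁∧e₂∧e₃∧e₄ + e₃∧e₄∧e₅∧e₆); in particular the
2-form *σ_T (identified with a skew-symmetric matrix via its values on the basis) has
rank 6 if and only if β ≠ 0 and α ≠ β.

ℝ⁶ = Fin 6 → ℝ with standard basis (0-based indices); wedge products of dual basis 1-forms
are written as determinants of coordinates; σ_T(X,Y,Z,W) = Σ_cyclic{X,Y,Z} ⟨T(X,Y),T(Z,W)⟩.
Since *(e₁∧e₂∧e₅∧e₆) = e₃∧e₄, *(e₁∧e₂∧e₃∧e₄) = e₅∧e₆ and *(e₃∧e₄∧e₅∧e₆) = e₁∧e₂, the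
2-form *σ_T is β(β-α)(e₃∧e₄ + e₅∧e₆ + e₁∧e₂), whose matrix of values on the basis is
`starSigmaMatrix` below. -/

set_option maxHeartbeats 1000000 in
theorem det_fin_four' {R : Type*} [CommRing R] (A : Matrix (Fin 4) (Fin 4) R) :
    A.det =
      A 0 0 * (A 1 1 * A 2 2 * A 3 3 - A 1 1 * A 2 3 * A 3 2 - A 1 2 * A 2 1 * A 3 3
        + A 1 2 * A 2 3 * A 3 1 + A 1 3 * A 2 1 * A 3 2 - A 1 3 * A 2 2 * A 3 1)
      - A 0 1 * (A 1 0 * A 2 2 * A 3 3 - A 1 0 * A 2 3 * A 3 2 - A 1 2 * A 2 0 * A 3 3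
        + A 1 2 * A 2 3 * A 3 0 + A 1 3 * A 2 0 * A 3 2 - A 1 3 * A 2 2 * A 3 0)
      + A 0 2 * (A 1 0 * A 2 1 * A 3 3 - A 1 0 * A 2 3 * A 3 1 - A 1 1 * A 2 0 * A 3 3
        + A 1 1 * A 2 3 * A 3 0 + A 1 3 * A 2 0 * A 3 1 - A 1 3 * A 2 1 * A 3 0)
      - A 0 3 * (A 1 0 * A 2 1 * A 3 2 - A 1 0 * A 2 2 * A 3 1 - A 1 1 * A 2 0 * A 3 2
        + A 1 1 * A 2 2 * A 3 0 + A 1 2 * A 2 0 * A 3 1 - A 1 2 * A 2 1 * A 3 0) := by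
  rw [Matrix.det_succ_row_zero, Fin.sum_univ_four]
  simp [Matrix.det_fin_three, Matrix.submatrix_apply, Fin.succAbove, Fin.lt_def]
  norm_num [show ((3:Fin 4):ℕ) = 3 from rfl, Fin.castSucc, Fin.castAdd, Fin.castLE]
  ring

noncomputable section

def d3 (i j k : Fin 6) (X Y Z : Fin 6 → ℝ) : ℝ :=
  Matrix.det (Matrix.of fun p q => ![X, Y, Z] p (![i, j, k] q))

def d4 (i j k l : Fin 6) (X Y Z W : Fin 6 → ℝ) : ℝ :=
  Matrix.det (Matrix.of fun p q => ![X, Y, Z, W] p (![i, j, k, l] q))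

/-- T = α e₁∧e₃∧e₅ + α' e₂∧e₄∧e₆ + β(e₂∧e₄∧e₅ + e₂∧e₃∧e₆ + e₁∧e₄∧e₆) -/
def Tq (a a' b : ℝ) (X Y Z : Fin 6 → ℝ) : ℝ :=
  a * d3 0 2 4 X Y Z + a' * d3 1 3 5 X Y Z
    + b * (d3 1 3 4 X Y Z + d3 1 2 5 X Y Z + d3 0 3 5 X Y Z)

/-- σ_T(X,Y,Z,W) = Σ_cyclic{X,Y,Z} ⟨T(X,Y), T(Z,W)⟩ -/
def sigmaq (a a' b : ℝ) (X Y Z W : Fin 6 → ℝ) : ℝ :=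
  ∑ m : Fin 6,
    (Tq a a' b X Y (Pi.single m 1) * Tq a a' b Z W (Pi.single m 1)
      + Tq a a' b Y Z (Pi.single m 1) * Tq a a' b X W (Pi.single m 1)
      + Tq a a' b Z X (Pi.single m 1) * Tq a a' b Y W (Pi.single m 1))

/-- the matrix ((*σ_T)(e_i, e_j))_{ij} of the 2-form *σ_T = β(β-α)(e₁∧e₂ + e₃∧e₄ + e₅∧e₆) -/
def starSigmaMatrix (a b : ℝ) : Matrix (Fin 6) (Fin 6) ℝ :=
  (b * (b - a)) • !![0, 1, 0, 0, 0, 0; -1, 0, 0, 0, 0, 0;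
                    0, 0, 0, 1, 0, 0; 0, 0, -1, 0, 0, 0;
                    0, 0, 0, 0, 0, 1; 0, 0, 0, 0, -1, 0]

set_option maxHeartbeats 1000000

lemma Tq0 (a a' b : ℝ) (X Y : Fin 6 → ℝ) :
    Tq a a' b X Y (Pi.single 0 1)
      = a * (X 2 * Y 4 - X 4 * Y 2) + b * (X 3 * Y 5 - X 5 * Y 3) := by
  simp [Tq, d3, Matrix.det_fin_three, Pi.single_apply]; try ring

lemma Tq1 (a a' b : ℝ) (X Y : Fin 6 → ℝ) :
    Tq a a' b X Y (Pi.single 1 1)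
      = a' * (X 3 * Y 5 - X 5 * Y 3)
        + b * ((X 3 * Y 4 - X 4 * Y 3) + (X 2 * Y 5 - X 5 * Y 2)) := by
  simp [Tq, d3, Matrix.det_fin_three, Pi.single_apply]; try ring

lemma Tq2 (a a' b : ℝ) (X Y : Fin 6 → ℝ) :
    Tq a a' b X Y (Pi.single 2 1)
      = -(a * (X 0 * Y 4 - X 4 * Y 0)) - b * (X 1 * Y 5 - X 5 * Y 1) := by
  simp [Tq, d3, Matrix.det_fin_three, Pi.single_apply]; try ring

lemma Tq3 (a a' b : ℝ) (X Y : Fin 6 → ℝ) :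
    Tq a a' b X Y (Pi.single 3 1)
      = -(a' * (X 1 * Y 5 - X 5 * Y 1))
        - b * ((X 1 * Y 4 - X 4 * Y 1) + (X 0 * Y 5 - X 5 * Y 0)) := by
  simp [Tq, d3, Matrix.det_fin_three, Pi.single_apply]; try ring

lemma Tq4 (a a' b : ℝ) (X Y : Fin 6 → ℝ) :
    Tq a a' b X Y (Pi.single 4 1)
      = a * (X 0 * Y 2 - X 2 * Y 0) + b * (X 1 * Y 3 - X 3 * Y 1) := by
  simp [Tq, d3, Matrix.det_fin_three, Pi.single_apply]; try ring

lemma Tq5 (a a' b : ℝ) (X Y : Fin 6 → ℝ) :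
    Tq a a' b X Y (Pi.single 5 1)
      = a' * (X 1 * Y 3 - X 3 * Y 1)
        + b * ((X 1 * Y 2 - X 2 * Y 1) + (X 0 * Y 3 - X 3 * Y 0)) := by
  simp [Tq, d3, Matrix.det_fin_three, Pi.single_apply]; try ring

set_option maxHeartbeats 4000000 in
lemma sigmaq_eq (a a' b : ℝ) (X Y Z W : Fin 6 → ℝ) :
        sigmaq a a' b X Y Z W
          = b * (b - a) * (d4 0 1 4 5 X Y Z W + d4 0 1 2 3 X Y Z W + d4 2 3 4 5 X Y Z W) := by
  rw [sigmaq, Fin.sum_univ_six]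
  simp only [Tq0, Tq1, Tq2, Tq3, Tq4, Tq5, d4, det_fin_four']
  simp only [Matrix.of_apply, Matrix.cons_val]
  norm_num
  ring

set_option maxRecDepth 4000 in
lemma detJ : (!![0, 1, 0, 0, 0, 0; -1, 0, 0, 0, 0, 0;
                    0, 0, 0, 1, 0, 0; 0, 0, -1, 0, 0, 0;
                    0, 0, 0, 0, 0, 1; 0, 0, 0, 0, -1, 0] : Matrix (Fin 6) (Fin 6) ℝ).det = 1 := by
  simp [Matrix.det_succ_row_zero, Fin.sum_univ_succ]
  simp [Fin.succAbove, Fin.lt_def]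

lemma rank_iff (a b : ℝ) : (starSigmaMatrix a b).rank = 6 ↔ (b ≠ 0 ∧ a ≠ b) := by
  constructor
  · intro h
    by_contra hc
    have hz : b * (b - a) = 0 := by
      rcases not_and_or.mp hc with h1 | h1
      · simp [not_not.mp h1]
      · have : b - a = 0 := by have := not_not.mp h1; rw [this]; ring
        simp [this]
    rw [starSigmaMatrix, hz, zero_smul] at h
    simp [Matrix.rank_zero] at h
  · rintro ⟨hb, hab⟩
    have hz : b * (b - a) ≠ 0 := mul_ne_zero hb (sub_ne_zero.mpr (Ne.symm hab))
    have hdet : (starSigmaMatrix a b).det = (b * (b - a)) ^ 6 := by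
      rw [starSigmaMatrix, Matrix.det_smul, detJ]
      simp
    have : IsUnit (starSigmaMatrix a b) := by
      rw [Matrix.isUnit_iff_isUnit_det, hdet, isUnit_iff_ne_zero]
      positivity
    rw [Matrix.rank_of_isUnit _ this]
    simp

theorem sigmaT_generic_form (a a' b : ℝ) :
    (∀ X Y Z W : Fin 6 → ℝ,
        sigmaq a a' b X Y Z W
          = b * (b - a) * (d4 0 1 4 5 X Y Z W + d4 0 1 2 3 X Y Z W + d4 2 3 4 5 X Y Z W))
      ∧ ((starSigmaMatrix a b).rank = 6 ↔ (b ≠ 0 ∧ a ≠ b)) := by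
  exact ⟨fun X Y Z W => sigmaq_eq a a' b X Y Z W, rank_iff a b⟩

end
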